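/- Let $f(r) = r_1 r_2 \cdots r_n$ and fix $r, s \in \mathbb{R}^n$. For each index $i$, the Aumann-Shapley attribution $z_i^{AS}(r,s) = \int_0^1 \partial_i f(r + t(s-r)) \,(s_i - r_i)\, dt$ equals $\frac{s_i - r_i}{n!} \sum_{J \subseteq [n] \setminus \{i\}} |J|!\,(n-1-|J|)! \prod_{j \in J} s_j \prod_{j \in [n]\setminus\{i\}\setminus J} r_j$. -/

import Mathlib

lemma beta_nat (a b : ℕ) :
    ∫ t in (0:ℝ)..1, t ^ a * (1 - t) ^ b =
      (Nat.factorial a * Nat.factorial b : ℝ) / Nat.factorial (a + b + 1) := by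
  induction b generalizing a with
  | zero =>
    simp [integral_pow, Nat.factorial_succ]
    rw [eq_div_iff (by positivity)]
    field_simp
  | succ b ih =>
    have hu : ∀ x ∈ Set.uIcc (0:ℝ) 1, HasDerivAt (fun t : ℝ => (1 - t) ^ (b + 1))
        (-((b + 1 : ℝ) * (1 - x) ^ b)) x := by
      intro x _
      have := ((hasDerivAt_id x).const_sub 1).fun_pow (b + 1)
      simpa [mul_comm, mul_assoc, mul_left_comm] using this
    have hv : ∀ x ∈ Set.uIcc (0:ℝ) 1, HasDerivAt (fun t : ℝ => t ^ (a + 1) / (a + 1))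
        (x ^ a) x := by
      intro x _
      have h0 := (hasDerivAt_pow (a + 1) x).div_const ((a:ℝ) + 1)
      have h : (a : ℝ) + 1 ≠ 0 := by positivity
      refine h0.congr_deriv ?_
      rw [Nat.add_sub_cancel]
      push_cast
      field_simp
    have key := intervalIntegral.integral_mul_deriv_eq_deriv_mul hu hv
      (by apply Continuous.intervalIntegrable; continuity)
      (by apply Continuous.intervalIntegrable; continuity)
    have h2 : ∫ x in (0:ℝ)..1, -((b + 1 : ℝ) * (1 - x) ^ b) * (x ^ (a + 1) / (a + 1))
        = -(((b:ℝ)+1)/((a:ℝ)+1)) * ∫ x in (0:ℝ)..1, x ^ (a+1) * (1 - x) ^ b := by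
      rw [← intervalIntegral.integral_const_mul]
      congr 1; ext x; ring
    rw [h2, ih (a+1)] at key
    have hEq : (∫ t in (0:ℝ)..1, t ^ a * (1 - t) ^ (b+1))
        = ∫ x in (0:ℝ)..1, (1 - x) ^ (b + 1) * x ^ a := by
      congr 1; ext x; ring
    rw [hEq, key]
    have hab : a + (b + 1) + 1 = a + 1 + b + 1 := by omega
    rw [hab]
    have h1 : (a : ℝ) + 1 ≠ 0 := by positivity
    have h3 : (Nat.factorial (a + 1 + b + 1) : ℝ) ≠ 0 := by positivity
    norm_num
    field_simp
    push_cast [Nat.factorial_succ]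
    ring
open Finset in
theorem aumannShapley_eq_shapleyShubik_for_product {n : ℕ}
    (r s : Fin n → ℝ) (i : Fin n) :
    (∫ t in (0:ℝ)..1,
        (s i - r i) * ∏ j ∈ Finset.univ.erase i, (r j + t * (s j - r j))) =
      (s i - r i) / (Nat.factorial n : ℝ) *
        ∑ J ∈ (Finset.univ.erase i).powerset,
          (Nat.factorial J.card * Nat.factorial (n - 1 - J.card) : ℝ) *
            (∏ j ∈ J, s j) * ∏ j ∈ (Finset.univ.erase i) \ J, r j := by
  classical
  set E := Finset.univ.erase i with hE
  have hcard : E.card = n - 1 := by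
    rw [hE, card_erase_of_mem (mem_univ i), card_univ, Fintype.card_fin]
  have hn : 1 ≤ n := i.pos
  have hprod : ∀ t : ℝ, (∏ j ∈ E, (r j + t * (s j - r j))) =
      ∑ J ∈ E.powerset,
        (t ^ J.card * (1 - t) ^ (n - 1 - J.card)) *
          ((∏ j ∈ J, s j) * ∏ j ∈ E \ J, r j) := by
    intro t
    have h1 : (∏ j ∈ E, (r j + t * (s j - r j))) =
        ∏ j ∈ E, (t * s j + (1 - t) * r j) := by
      apply Finset.prod_congr rfl
      intro j _; ring
    rw [h1, Finset.prod_add]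
    apply Finset.sum_congr rfl
    intro J hJ
    rw [Finset.mem_powerset] at hJ
    have hJc : (E \ J).card = n - 1 - J.card := by
      rw [card_sdiff_of_subset hJ, hcard]
    rw [Finset.prod_mul_distrib, Finset.prod_mul_distrib,
      Finset.prod_const, Finset.prod_const, hJc]
    ring
  have hint : ∀ J ∈ E.powerset, IntervalIntegrable
      (fun t : ℝ => (t ^ J.card * (1 - t) ^ (n - 1 - J.card)) *
        ((∏ j ∈ J, s j) * ∏ j ∈ E \ J, r j)) MeasureTheory.volume 0 1 := by
    intro J _
    apply Continuous.intervalIntegrable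
    continuity
  calc (∫ t in (0:ℝ)..1, (s i - r i) * ∏ j ∈ E, (r j + t * (s j - r j)))
      = (s i - r i) * ∫ t in (0:ℝ)..1, ∑ J ∈ E.powerset,
          (t ^ J.card * (1 - t) ^ (n - 1 - J.card)) *
            ((∏ j ∈ J, s j) * ∏ j ∈ E \ J, r j) := by
        rw [intervalIntegral.integral_const_mul]
        congr 1
        apply intervalIntegral.integral_congr
        intro t _
        exact hprod t
    _ = (s i - r i) * ∑ J ∈ E.powerset,
          ((Nat.factorial J.card * Nat.factorial (n - 1 - J.card) : ℝ) /
              Nat.factorial n) *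
            ((∏ j ∈ J, s j) * ∏ j ∈ E \ J, r j) := by
        rw [intervalIntegral.integral_finset_sum hint]
        congr 1
        apply Finset.sum_congr rfl
        intro J hJ
        rw [Finset.mem_powerset] at hJ
        have hle : J.card ≤ n - 1 := hcard ▸ Finset.card_le_card hJ
        have hsum : J.card + (n - 1 - J.card) + 1 = n := by omega
        rw [intervalIntegral.integral_mul_const, beta_nat, hsum]
    _ = (s i - r i) / (Nat.factorial n : ℝ) *
        ∑ J ∈ E.powerset,
          (Nat.factorial J.card * Nat.factorial (n - 1 - J.card) : ℝ) *
            (∏ j ∈ J, s j) * ∏ j ∈ E \ J, r j := by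
        rw [Finset.mul_sum, Finset.mul_sum]
        apply Finset.sum_congr rfl
        intro J _
        ring
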